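/- arXiv:2503.13996 — 4 statements merged into one kernel-verified Lean document; each statement's English description precedes it below -/
import Mathlib

section
/- Let r ≥ 1 and let φ₀, φ₁, …, φ_{r-1} : [0,∞) → ℝ be functions such that each φ_{k-1} is differentiable for k = 1, …, r-1, and let λ₁, …, λ_{r-1} > 0 satisfy φ_k(t) = φ_{k-1}'(t) + λ_k·φ_{k-1}(t) for all t ≥ 0 and all k = 1, …, r-1. Suppose φ_k(0) ≥ 0 for every k = 0, …, r-1, and φ_{r-1}(t) ≥ 0 for all t ≥ 0. Then φ_k(t) ≥ 0 for every k = 0, …, r-1 and all t ≥ 0; in particular φ₀(t) ≥ 0 for all t ≥ 0. -/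
/-- Key one-step lemma: if `y' + λ y ≥ 0` on `[0,∞)`, `λ > 0` (only `λ ∈ ℝ` needed),
and `y 0 ≥ 0`, then `y ≥ 0` on `[0,∞)`. -/
lemma key_step (y y' : ℝ → ℝ) (l : ℝ)
    (hderiv : ∀ t, 0 ≤ t → HasDerivWithinAt y (y' t) (Set.Ici 0) t)
    (hineq : ∀ t, 0 ≤ t → 0 ≤ y' t + l * y t)
    (h0 : 0 ≤ y 0) : ∀ t, 0 ≤ t → 0 ≤ y t := by
  set g : ℝ → ℝ := fun t => Real.exp (l * t) * y t with hg
  have hgderiv : ∀ t, 0 ≤ t →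
      HasDerivWithinAt g (Real.exp (l * t) * (y' t + l * y t)) (Set.Ici 0) t := by
    intro t ht
    have he : HasDerivWithinAt (fun t => Real.exp (l * t)) (l * Real.exp (l * t))
        (Set.Ici 0) t := by
      have : HasDerivAt (fun t => Real.exp (l * t)) (Real.exp (l * t) * l) t := by
        have h1 : HasDerivAt (fun t : ℝ => l * t) l t := by
          simpa using (hasDerivAt_id t).const_mul l
        exact (Real.hasDerivAt_exp (l * t)).comp t h1
      simpa [mul_comm] using this.hasDerivWithinAt
    have := he.mul (hderiv t ht)
    convert this using 1
    · rfl
    · rfl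
    · rfl
    · ring
  have hmono : MonotoneOn g (Set.Ici 0) := by
    apply monotoneOn_of_deriv_nonneg (convex_Ici 0)
    · intro t ht
      exact (hgderiv t ht).continuousWithinAt
    · intro t ht
      rw [interior_Ici] at ht
      exact ((hgderiv t (le_of_lt ht)).hasDerivAt
        (Ici_mem_nhds ht)).differentiableAt.differentiableWithinAt
    · intro t ht
      rw [interior_Ici] at ht
      have := ((hgderiv t (le_of_lt ht)).hasDerivAt (Ici_mem_nhds ht)).deriv
      rw [this]
      exact mul_nonneg (Real.exp_pos _).le (hineq t ht.le)
  intro t ht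
  have h1 : g 0 ≤ g t := hmono (Set.self_mem_Ici) ht ht
  have h2 : 0 ≤ g 0 := by simpa [hg] using mul_nonneg (Real.exp_pos 0).le h0
  have h3 : 0 ≤ g t := le_trans h2 h1
  have := mul_nonneg (Real.exp_pos (-(l * t))).le h3
  simpa [hg, ← Real.exp_add, ← mul_assoc] using this

/-- HOCBF cascade: with `φ_k = φ_{k-1}' + λ_k φ_{k-1}` for `k = 1, …, r-1`,
`λ_k > 0`, `φ_k 0 ≥ 0` for `k = 0, …, r-1`, and `φ_{r-1} t ≥ 0` for all `t ≥ 0`,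
every `φ_k` (in particular `φ_0`) remains nonnegative on `[0,∞)`. -/
theorem stmt_8 (r : ℕ) (hr : 1 ≤ r) (φ φ' : ℕ → ℝ → ℝ) (lam : ℕ → ℝ)
    (hlam : ∀ k, 1 ≤ k → k ≤ r - 1 → 0 < lam k)
    (hderiv : ∀ k, 1 ≤ k → k ≤ r - 1 → ∀ t, 0 ≤ t →
      HasDerivWithinAt (φ (k - 1)) (φ' (k - 1) t) (Set.Ici 0) t)
    (hrec : ∀ k, 1 ≤ k → k ≤ r - 1 → ∀ t, 0 ≤ t →
      φ k t = φ' (k - 1) t + lam k * φ (k - 1) t)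
    (hinit : ∀ k, k ≤ r - 1 → 0 ≤ φ k 0)
    (htop : ∀ t, 0 ≤ t → 0 ≤ φ (r - 1) t) :
    ∀ k, k ≤ r - 1 → ∀ t, 0 ≤ t → 0 ≤ φ k t := by
  set m := r - 1 with hm
  have main : ∀ d, d ≤ m → ∀ t, 0 ≤ t → 0 ≤ φ (m - d) t := by
    intro d
    induction d with
    | zero => intro _ t ht; simpa using htop t ht
    | succ d ih =>
      intro hd t ht
      have hdm : d ≤ m := le_trans (Nat.le_succ d) hd
      set k := m - (d + 1) with hk
      have hk1 : k + 1 = m - d := by omega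
      have h1le : 1 ≤ k + 1 := Nat.succ_le_succ (Nat.zero_le k)
      have hle : k + 1 ≤ m := by omega
      apply key_step (φ k) (φ' k) (lam (k + 1))
        (by simpa using hderiv (k + 1) h1le hle)
        (fun s hs => by
          have := hrec (k + 1) h1le hle s hs
          simp only [Nat.add_sub_cancel] at this
          rw [← this, hk1]
          exact ih hdm s hs)
        (hinit k (by omega)) t ht
  intro k hk t ht
  have := main (m - k) (by omega) t ht
  have hmk : m - (m - k) = k := by omega
  rwa [hmk] at this
end

section
/- Let n ≥ 1 and let λ_r, λ_V, δ₁, β₁ be reals with 0 < λ_r ≤ λ_V, δ₁ ≥ 0, β₁ > 0. Let φ, V : [0,∞) → ℝ be differentiable with V(t) ≥ 0 and V'(t) ≤ -λ_V·V(t) for all t ≥ 0, let d̃, a : [0,∞) → ℝⁿ with ‖d̃(t)‖ ≤ δ₁·exp(-λ_V·t/2) for all t ≥ 0 (Euclidean norm), and suppose the compensated barrier condition φ'(t) + λ_r·φ(t) ≥ ⟨a(t), d̃(t)⟩ + ‖a(t)‖·δ₁·exp(-λ_V·t/2) holds for all t ≥ 0. If β₁·φ(0) ≥ V(0), then the function h̄(t)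 := β₁·φ(t) - V(t) satisfies h̄(t) ≥ 0 for all t ≥ 0, and consequently φ(t) ≥ V(t)/β₁ ≥ 0 for all t ≥ 0. -/
/-- Core of Theorem 1 along a trajectory: under the compensated barrier
condition `φ' + λ_r φ ≥ ⟨a, d̃⟩ + ‖a‖ δ₁ e^{-λ_V t/2}`, with `V ≥ 0`,
`V' ≤ -λ_V V`, `‖d̃ t‖ ≤ δ₁ e^{-λ_V t/2}`, and `β₁ φ 0 ≥ V 0`, the candidate
barrier `h̄ = β₁ φ - V` stays nonnegative, hence `φ t ≥ V t / β₁ ≥ 0`. -/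
theorem stmt_9 (n : ℕ) (hn : 1 ≤ n) (lamr lamV δ₁ β₁ : ℝ)
    (hlamr : 0 < lamr) (hle : lamr ≤ lamV) (hδ₁ : 0 ≤ δ₁) (hβ₁ : 0 < β₁)
    (φ φ' V V' : ℝ → ℝ)
    (hφ : ∀ t, 0 ≤ t → HasDerivWithinAt φ (φ' t) (Set.Ici 0) t)
    (hV : ∀ t, 0 ≤ t → HasDerivWithinAt V (V' t) (Set.Ici 0) t)
    (hVpos : ∀ t, 0 ≤ t → 0 ≤ V t)
    (hVdec : ∀ t, 0 ≤ t → V' t ≤ -lamV * V t)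
    (de a : ℝ → EuclideanSpace ℝ (Fin n))
    (hde : ∀ t, 0 ≤ t → ‖de t‖ ≤ δ₁ * Real.exp (-lamV * t / 2))
    (hbar : ∀ t, 0 ≤ t →
      (inner ℝ (a t) (de t) : ℝ) + ‖a t‖ * δ₁ * Real.exp (-lamV * t / 2) ≤
        φ' t + lamr * φ t)
    (hinit : V 0 ≤ β₁ * φ 0) :
    ∀ t, 0 ≤ t → 0 ≤ β₁ * φ t - V t ∧ V t / β₁ ≤ φ t ∧ 0 ≤ V t / β₁ := by
  -- key differential inequalities
  have hφ' : ∀ t, 0 ≤ t → -lamr * φ t ≤ φ' t := by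
    intro t ht
    have h1 : -(‖a t‖ * ‖de t‖) ≤ (inner ℝ (a t) (de t) : ℝ) :=
      neg_le_of_abs_le (abs_real_inner_le_norm _ _)
    have h2 : ‖a t‖ * ‖de t‖ ≤ ‖a t‖ * (δ₁ * Real.exp (-lamV * t / 2)) :=
      mul_le_mul_of_nonneg_left (hde t ht) (norm_nonneg _)
    have := hbar t ht
    nlinarith
  -- monotonicity of g t = (β₁ φ t - V t) * exp (lamr * t)
  set g : ℝ → ℝ := fun t => (β₁ * φ t - V t) * Real.exp (lamr * t) with hg
  have hgmono : MonotoneOn g (Set.Ici 0) := by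
    apply monotoneOn_of_hasDerivWithinAt_nonneg (convex_Ici 0)
      (f' := fun t => (β₁ * φ' t - V' t) * Real.exp (lamr * t)
        + (β₁ * φ t - V t) * (lamr * Real.exp (lamr * t)))
    · intro t ht
      have hd : HasDerivAt (fun s => Real.exp (lamr * s))
          (Real.exp (lamr * t) * lamr) t := by
        simpa [Function.comp_def] using (Real.hasDerivAt_exp (lamr * t)).comp t
          ((hasDerivAt_id t).const_mul lamr)
      exact ((((hφ t ht).const_mul β₁).sub (hV t ht)).mul
        hd.hasDerivWithinAt).continuousWithinAt
    · intro t ht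
      rw [interior_Ici] at ht ⊢
      have ht' : (0:ℝ) ≤ t := le_of_lt ht
      have hd : HasDerivWithinAt (fun s => Real.exp (lamr * s))
          (Real.exp (lamr * t) * lamr) (Set.Ioi 0) t := by
        have : HasDerivAt (fun s => Real.exp (lamr * s))
            (Real.exp (lamr * t) * lamr) t := by
          simpa [Function.comp_def] using (Real.hasDerivAt_exp (lamr * t)).comp t
            ((hasDerivAt_id t).const_mul lamr)
        exact this.hasDerivWithinAt
      have := ((((hφ t ht').const_mul β₁).sub (hV t ht')).mono
        (Set.Ioi_subset_Ici le_rfl)).mul hd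
      convert this using 1
      case e'_9 => simp only [Pi.sub_apply]; ring
      all_goals rfl
    · intro t ht
      rw [interior_Ici] at ht
      have ht' : (0:ℝ) ≤ t := le_of_lt ht
      have h1 := hφ' t ht'
      have h2 := hVdec t ht'
      have h3 := hVpos t ht'
      have hexp : 0 < Real.exp (lamr * t) := Real.exp_pos _
      have hVle : -V' t ≥ lamV * V t := by linarith
      have hVr : lamr * V t ≤ lamV * V t := mul_le_mul_of_nonneg_right hle h3
      have key : -lamr * (β₁ * φ t - V t) ≤ β₁ * φ' t - V' t := by
        nlinarith [mul_le_mul_of_nonneg_left h1 hβ₁.le]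
      nlinarith [mul_le_mul_of_nonneg_right key hexp.le]
  intro t ht
  have h0 : g 0 ≤ g t := hgmono (Set.self_mem_Ici) ht ht
  have hg0 : 0 ≤ g 0 := by
    simp only [hg, mul_zero, Real.exp_zero, mul_one]
    linarith
  have hgt : 0 ≤ (β₁ * φ t - V t) * Real.exp (lamr * t) := le_trans hg0 h0
  have hbarr : 0 ≤ β₁ * φ t - V t :=
    (mul_nonneg_iff_of_pos_right (Real.exp_pos _)).mp hgt
  refine ⟨hbarr, ?_, div_nonneg (hVpos t ht) hβ₁.le⟩
  rw [div_le_iff₀ hβ₁]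
  nlinarith
end

section
/- Let n ≥ 1 and let λ_{Vv}, λ_V, δ₁, β₂ be reals with 0 < λ_{Vv} ≤ λ_V, δ₁ ≥ 0, β₂ > 0. Let V_v, V : [0,∞) → ℝ be differentiable with V(t) ≥ 0 and V'(t) ≤ -λ_V·V(t) for all t ≥ 0, let d̃, a : [0,∞) → ℝⁿ with ‖d̃(t)‖ ≤ δ₁·exp(-λ_V·t/2) for all t ≥ 0 (Euclidean norm), and suppose V_v'(t) + λ_{Vv}·V_v(t) ≥ ⟨a(t), d̃(t)⟩ + ‖a(t)‖·δ₁·exp(-λ_V·t/2) for all t ≥ 0. If β₂·V_v(0) ≥ V(0), then h̄_V(t) := β₂·V_v(t) - V(t) satisfies h̄_V(t) ≥ 0 for all t ≥ 0, and consequently V_v(t) ≥ V(t)/β₂ ≥ 0 for all t ≥ 0. -/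
/-- Core of Theorem 2 along a trajectory: under the compensated VCBF condition
`V_v' + λ_{Vv} V_v ≥ ⟨a, d̃⟩ + ‖a‖ δ₁ e^{-λ_V t/2}`, with `V ≥ 0`,
`V' ≤ -λ_V V`, `‖d̃ t‖ ≤ δ₁ e^{-λ_V t/2}`, and `β₂ V_v 0 ≥ V 0`, the candidate
barrier `h̄_V = β₂ V_v - V` stays nonnegative, hence `V_v t ≥ V t / β₂ ≥ 0`. -/
theorem stmt_10 (n : ℕ) (hn : 1 ≤ n) (lamVv lamV δ₁ β₂ : ℝ)
    (hlamVv : 0 < lamVv) (hle : lamVv ≤ lamV) (hδ₁ : 0 ≤ δ₁) (hβ₂ : 0 < β₂)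
    (Vv Vv' V V' : ℝ → ℝ)
    (hVv : ∀ t, 0 ≤ t → HasDerivWithinAt Vv (Vv' t) (Set.Ici 0) t)
    (hV : ∀ t, 0 ≤ t → HasDerivWithinAt V (V' t) (Set.Ici 0) t)
    (hVpos : ∀ t, 0 ≤ t → 0 ≤ V t)
    (hVdec : ∀ t, 0 ≤ t → V' t ≤ -lamV * V t)
    (de a : ℝ → EuclideanSpace ℝ (Fin n))
    (hde : ∀ t, 0 ≤ t → ‖de t‖ ≤ δ₁ * Real.exp (-lamV * t / 2))
    (hbar : ∀ t, 0 ≤ t →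
      (inner ℝ (a t) (de t) : ℝ) + ‖a t‖ * δ₁ * Real.exp (-lamV * t / 2) ≤
        Vv' t + lamVv * Vv t)
    (hinit : V 0 ≤ β₂ * Vv 0) :
    ∀ t, 0 ≤ t → 0 ≤ β₂ * Vv t - V t ∧ V t / β₂ ≤ Vv t ∧ 0 ≤ V t / β₂ := by
  -- Auxiliary function g t = (β₂ Vv t - V t) * exp (lamVv t)
  set g : ℝ → ℝ := fun t => (β₂ * Vv t - V t) * Real.exp (lamVv * t) with hg
  set g' : ℝ → ℝ := fun t =>
    (β₂ * Vv' t - V' t) * Real.exp (lamVv * t)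
      + (β₂ * Vv t - V t) * (lamVv * Real.exp (lamVv * t)) with hg'
  have hderiv : ∀ t, 0 ≤ t → HasDerivWithinAt g (g' t) (Set.Ici 0) t := by
    intro t ht
    have h1 : HasDerivWithinAt (fun t => β₂ * Vv t - V t) (β₂ * Vv' t - V' t)
        (Set.Ici 0) t := ((hVv t ht).const_mul β₂).sub (hV t ht)
    have h2 : HasDerivWithinAt (fun t => Real.exp (lamVv * t))
        (lamVv * Real.exp (lamVv * t)) (Set.Ici 0) t := by
      have := (Real.hasDerivAt_exp (lamVv * t)).comp t
        ((hasDerivAt_id t).const_mul lamVv)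
      exact this.hasDerivWithinAt.congr_deriv (by ring)
    exact h1.mul h2
  have hg'nonneg : ∀ t, 0 ≤ t → 0 ≤ g' t := by
    intro t ht
    have hinner : -(‖a t‖ * δ₁ * Real.exp (-lamV * t / 2)) ≤
        (inner ℝ (a t) (de t) : ℝ) := by
      have h1 : |(inner ℝ (a t) (de t) : ℝ)| ≤ ‖a t‖ * ‖de t‖ :=
        abs_real_inner_le_norm _ _
      have h2 : ‖a t‖ * ‖de t‖ ≤ ‖a t‖ * (δ₁ * Real.exp (-lamV * t / 2)) :=
        mul_le_mul_of_nonneg_left (hde t ht) (norm_nonneg _)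
      nlinarith [neg_abs_le (inner ℝ (a t) (de t) : ℝ)]
    have hVvineq : 0 ≤ Vv' t + lamVv * Vv t := by
      have := hbar t ht
      nlinarith
    have hVineq : 0 ≤ -V' t - lamVv * V t := by
      have h1 := hVdec t ht
      have h2 := hVpos t ht
      nlinarith
    have hexp : 0 < Real.exp (lamVv * t) := Real.exp_pos _
    have : 0 ≤ β₂ * Vv' t - V' t + lamVv * (β₂ * Vv t - V t) := by nlinarith
    simp only [hg']
    nlinarith
  have hmono : MonotoneOn g (Set.Ici (0 : ℝ)) := by
    apply monotoneOn_of_deriv_nonneg (convex_Ici 0)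
    · intro t ht
      exact (hderiv t ht).continuousWithinAt
    · intro t ht
      rw [interior_Ici] at ht
      exact ((hderiv t (le_of_lt ht)).hasDerivAt
        (Ici_mem_nhds ht)).differentiableAt.differentiableWithinAt
    · intro t ht
      rw [interior_Ici] at ht
      rw [((hderiv t (le_of_lt ht)).hasDerivAt (Ici_mem_nhds ht)).deriv]
      exact hg'nonneg t (le_of_lt ht)
  intro t ht
  have hgt : g 0 ≤ g t := hmono (Set.self_mem_Ici) ht ht
  have hg0 : 0 ≤ g 0 := by
    simp only [hg, mul_zero, Real.exp_zero, mul_one]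
    linarith
  have hexp : 0 < Real.exp (lamVv * t) := Real.exp_pos _
  have hmain : 0 ≤ β₂ * Vv t - V t := by
    by_contra hcon
    push_neg at hcon
    have : g t < 0 := mul_neg_of_neg_of_pos hcon hexp
    linarith
  have hVt := hVpos t ht
  refine ⟨hmain, ?_, ?_⟩
  · rw [div_le_iff₀ hβ₂]; nlinarith
  · positivity
end

section
/- Let n ≥ 1, N ≥ 1, and let λ_V, δ₁ > 0. Let V : [0,∞) → ℝ be differentiable with V(t) ≥ 0 and V'(t) ≤ -λ_V·V(t) for all t ≥ 0, and let d̃ : [0,∞) → ℝⁿ satisfy ‖d̃(t)‖ ≤ δ₁·exp(-λ_V·t/2) for all t ≥ 0 (Euclidean norm). For each i = 1, …, N let φᵢ : [0,∞) → ℝ be differentiable, aᵢ : [0,∞) → ℝⁿ, 0 < λᵢ ≤ λ_V, βᵢ > 0 with βᵢ·φᵢ(0) ≥ V(0) and φᵢ'(t) + λᵢ·φᵢ(t) ≥ ⟨aᵢ(t), d̃(t)⟩ + ‖aᵢ(t)‖·δ₁·exp(-λ_V·t/2) for all t ≥ 0. Moreover, let V_v : [0,∞) → ℝ be differentiable, a_v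 : [0,∞) → ℝⁿ, 0 < λ_v ≤ λ_V, β_v > 0 with β_v·V_v(0) ≥ V(0) and V_v'(t) + λ_v·V_v(t) ≥ ⟨a_v(t), d̃(t)⟩ + ‖a_v(t)‖·δ₁·exp(-λ_V·t/2) for all t ≥ 0. Then simultaneously φᵢ(t) ≥ 0 for all i = 1, …, N and V_v(t) ≥ 0, for all t ≥ 0. -/
lemma gronwall_nonneg (f f' : ℝ → ℝ) (c : ℝ)
    (hf : ∀ t, 0 ≤ t → HasDerivWithinAt f (f' t) (Set.Ici 0) t)
    (h0 : 0 ≤ f 0) (h : ∀ t, 0 ≤ t → 0 ≤ f' t + c * f t) :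
    ∀ t, 0 ≤ t → 0 ≤ f t := by
  set g : ℝ → ℝ := fun t => f t * Real.exp (c * t) with hg
  have hg' : ∀ t, 0 ≤ t →
      HasDerivWithinAt g ((f' t + c * f t) * Real.exp (c * t)) (Set.Ici 0) t := by
    intro t ht
    have he : HasDerivWithinAt (fun t => Real.exp (c * t)) (c * Real.exp (c * t))
        (Set.Ici 0) t := by
      have := (Real.hasDerivAt_exp (c * t)).comp t ((hasDerivAt_id t).const_mul c)
      simpa [mul_comm, Function.comp_def] using this.hasDerivWithinAt
    have := (hf t ht).mul he
    exact this.congr_deriv (by ring)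
  have hmono : MonotoneOn g (Set.Ici 0) := by
    apply monotoneOn_of_hasDerivWithinAt_nonneg (convex_Ici 0)
      (f' := fun t => (f' t + c * f t) * Real.exp (c * t))
    · intro t ht
      exact (hg' t ht).continuousWithinAt
    · intro t ht
      rw [interior_Ici] at ht ⊢
      exact (hg' t (le_of_lt ht)).mono Set.Ioi_subset_Ici_self
    · intro t ht
      rw [interior_Ici] at ht
      exact mul_nonneg (h t ht.le) (Real.exp_pos _).le
  intro t ht
  have : g 0 ≤ g t := hmono (Set.self_mem_Ici) ht ht
  have hg0 : 0 ≤ g 0 := by simpa [hg] using h0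
  have : 0 ≤ g t := le_trans hg0 this
  have hexp : 0 < Real.exp (c * t) := Real.exp_pos _
  have hft : 0 ≤ f t * Real.exp (c * t) := this
  exact nonneg_of_mul_nonneg_right (by linarith [mul_comm (f t) (Real.exp (c * t))] : 0 ≤ Real.exp (c * t) * f t) hexp

/-- Core of Theorem 3 along a trajectory: if the `N` compensated HOCBF
conditions and the compensated VCBF condition all hold (zero slack in the
DOB-VCBF-QP), with `V ≥ 0`, `V' ≤ -λ_V V`, `‖d̃ t‖ ≤ δ₁ e^{-λ_V t/2}`, and the
initial conditions `β_i φ_i 0 ≥ V 0`, `β_v V_v 0 ≥ V 0`, then simultaneously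
`φ_i t ≥ 0` for every `i` and `V_v t ≥ 0`, for all `t ≥ 0`. -/
theorem stmt_11 (n N : ℕ) (hn : 1 ≤ n) (hN : 1 ≤ N) (lamV δ₁ : ℝ)
    (hlamV : 0 < lamV) (hδ₁ : 0 < δ₁)
    (V V' : ℝ → ℝ)
    (hV : ∀ t, 0 ≤ t → HasDerivWithinAt V (V' t) (Set.Ici 0) t)
    (hVpos : ∀ t, 0 ≤ t → 0 ≤ V t)
    (hVdec : ∀ t, 0 ≤ t → V' t ≤ -lamV * V t)
    (de : ℝ → EuclideanSpace ℝ (Fin n))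
    (hde : ∀ t, 0 ≤ t → ‖de t‖ ≤ δ₁ * Real.exp (-lamV * t / 2))
    (φ φ' : Fin N → ℝ → ℝ) (a : Fin N → ℝ → EuclideanSpace ℝ (Fin n))
    (lam β : Fin N → ℝ)
    (hlam : ∀ i, 0 < lam i) (hlamle : ∀ i, lam i ≤ lamV) (hβ : ∀ i, 0 < β i)
    (hφ : ∀ i, ∀ t, 0 ≤ t → HasDerivWithinAt (φ i) (φ' i t) (Set.Ici 0) t)
    (hinit : ∀ i, V 0 ≤ β i * φ i 0)
    (hbar : ∀ i, ∀ t, 0 ≤ t →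
      (inner ℝ (a i t) (de t) : ℝ) + ‖a i t‖ * δ₁ * Real.exp (-lamV * t / 2) ≤
        φ' i t + lam i * φ i t)
    (Vv Vv' : ℝ → ℝ) (av : ℝ → EuclideanSpace ℝ (Fin n)) (lamv βv : ℝ)
    (hlamv : 0 < lamv) (hlamvle : lamv ≤ lamV) (hβv : 0 < βv)
    (hVv : ∀ t, 0 ≤ t → HasDerivWithinAt Vv (Vv' t) (Set.Ici 0) t)
    (hinitv : V 0 ≤ βv * Vv 0)
    (hbarv : ∀ t, 0 ≤ t →
      (inner ℝ (av t) (de t) : ℝ) + ‖av t‖ * δ₁ * Real.exp (-lamV * t / 2) ≤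
        Vv' t + lamv * Vv t) :
    ∀ t, 0 ≤ t → (∀ i, 0 ≤ φ i t) ∧ 0 ≤ Vv t := by
  have key : ∀ (b : ℝ → EuclideanSpace ℝ (Fin n)) (t : ℝ), 0 ≤ t →
      0 ≤ (inner ℝ (b t) (de t) : ℝ) + ‖b t‖ * δ₁ * Real.exp (-lamV * t / 2) := by
    intro b t ht
    have h1 : -(‖b t‖ * ‖de t‖) ≤ (inner ℝ (b t) (de t) : ℝ) :=
      neg_le_of_abs_le (abs_real_inner_le_norm _ _)
    have h2 : ‖b t‖ * ‖de t‖ ≤ ‖b t‖ * (δ₁ * Real.exp (-lamV * t / 2)) :=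
      mul_le_mul_of_nonneg_left (hde t ht) (norm_nonneg _)
    nlinarith
  intro t ht
  constructor
  · intro i
    refine gronwall_nonneg (φ i) (φ' i) (lam i) (hφ i) ?_ ?_ t ht
    · have := hinit i; have := hVpos 0 le_rfl; nlinarith [hβ i]
    · intro s hs
      have := le_trans (key (a i) s hs) (hbar i s hs)
      linarith
  · refine gronwall_nonneg Vv Vv' lamv hVv ?_ ?_ t ht
    · have := hVpos 0 le_rfl; nlinarith
    · intro s hs
      have := le_trans (key av s hs) (hbarv s hs)
      linarith
end
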